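/- arXiv:2101.09740 — 2 statements merged into one kernel-verified Lean document; each statement's English description precedes it below -/
import Mathlib

section
/- For every i ∈ I and every y ∈ ℝ^d, V_𝒯(y) ≥ f_i + ⟨g_i, y − x_i⟩ + (μ/2)‖y − x_i‖². -/
open scoped RealInnerProductSpace BigOperators

/-- The auxiliary quadratic function `v_T(y, α)` from the strongly-convex extension
construction. -/
noncomputable def vT {d : ℕ} {I : Type*} [Fintype I] (L μ : ℝ)
    (x g : I → EuclideanSpace ℝ (Fin d)) (f : I → ℝ)
    (y : EuclideanSpace ℝ (Fin d)) (α : I → ℝ) : ℝ :=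
  L / 2 * ‖y‖ ^ 2
    - (L - μ) / 2 * ‖y - (1 / (L - μ)) • ∑ i, α i • (g i - μ • x i)‖ ^ 2
    + ∑ i, α i * (f i + 1 / (2 * (L - μ)) * ‖g i - L • x i‖ ^ 2 - L / 2 * ‖x i‖ ^ 2)

/-- The strongly-convex extension `V_T(y) = max_{α ∈ Δ_I} v_T(y, α)`. -/
noncomputable def VT {d : ℕ} {I : Type*} [Fintype I] (L μ : ℝ)
    (x g : I → EuclideanSpace ℝ (Fin d)) (f : I → ℝ)
    (y : EuclideanSpace ℝ (Fin d)) : ℝ :=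
  sSup (vT L μ x g f y '' stdSimplex ℝ I)

lemma vT_continuous {d : ℕ} {I : Type*} [Fintype I] (L μ : ℝ)
    (x g : I → EuclideanSpace ℝ (Fin d)) (f : I → ℝ)
    (y : EuclideanSpace ℝ (Fin d)) : Continuous (vT L μ x g f y) := by
  unfold vT
  fun_prop

lemma vT_single {d : ℕ} {I : Type*} [Fintype I] [DecidableEq I]
    {L μ : ℝ} (hμL : μ < L)
    (x g : I → EuclideanSpace ℝ (Fin d)) (f : I → ℝ) (i : I)
    (y : EuclideanSpace ℝ (Fin d)) :
    vT L μ x g f y (fun j => if j = i then (1:ℝ) else 0)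
      = f i + ⟪g i, y - x i⟫ + μ / 2 * ‖y - x i‖ ^ 2 := by
  have h0 : L - μ ≠ 0 := by linarith
  unfold vT
  simp only [ite_smul, one_smul, zero_smul, ite_mul, one_mul, zero_mul]
  rw [Finset.sum_ite_eq' Finset.univ i (fun j => (g j - μ • x j)),
    Finset.sum_ite_eq' Finset.univ i
      (fun j => (f j + 1 / (2 * (L - μ)) * ‖g j - L • x j‖ ^ 2 - L / 2 * ‖x j‖ ^ 2))]
  simp only [Finset.mem_univ, if_true]
  have expand : ∀ (a b : EuclideanSpace ℝ (Fin d)),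
      ‖a - b‖ ^ 2 = ‖a‖ ^ 2 - 2 * ⟪a, b⟫ + ‖b‖ ^ 2 := fun a b => by
    rw [@norm_sub_sq_real]
  have hy : ⟪y, g i⟫ = ⟪g i, y⟫ := real_inner_comm _ _
  have hx : ⟪y, x i⟫ = ⟪x i, y⟫ := real_inner_comm _ _
  have hgx : ⟪g i, x i⟫ = ⟪x i, g i⟫ := real_inner_comm _ _
  simp only [expand, inner_sub_right, real_inner_smul_right, norm_smul, mul_pow,
    Real.norm_eq_abs, sq_abs, hy, hx, hgx]
  field_simp
  ring

/-- The extension `V_T` lies above every quadratic lower model built from the data: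
`V_T(y) ≥ f_i + ⟪g_i, y − x_i⟫ + (μ/2)‖y − x_i‖²` for every `i` and `y`. -/
theorem stmt4 {d : ℕ} {I : Type*} [Fintype I] [Nonempty I]
    {L μ : ℝ} (hL : 0 < L) (hμL : μ < L)
    (x g : I → EuclideanSpace ℝ (Fin d)) (f : I → ℝ) :
    ∀ (i : I) (y : EuclideanSpace ℝ (Fin d)),
      f i + ⟪g i, y - x i⟫ + μ / 2 * ‖y - x i‖ ^ 2 ≤ VT L μ x g f y := by
  classical
  intro i y
  have hcomp : IsCompact (vT L μ x g f y '' stdSimplex ℝ I) :=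
    (isCompact_stdSimplex ℝ I).image (vT_continuous L μ x g f y)
  set α : I → ℝ := fun j => if j = i then (1:ℝ) else 0 with hα
  have hmem : α ∈ stdSimplex ℝ I := by
    constructor
    · intro j; by_cases h : j = i <;> simp [hα, h]
    · simp [hα, Finset.sum_ite_eq' Finset.univ i (fun _ => (1:ℝ))]
  have : vT L μ x g f y α ∈ vT L μ x g f y '' stdSimplex ℝ I := ⟨α, hmem, rfl⟩
  have hle := le_csSup hcomp.bddAbove this
  rw [← vT_single hμL x g f i y]
  exact hle
end

section
/- Suppose 0 ≤ μ < L and: (i) x_0 = 0 and g_* = 0; (ii) for every j ∈ I*_N, (1/(2L))‖g_j‖² + (μL/(2(L−μ)))‖x_* − x_j + (1/L)g_j‖² ≤ f_* − f_j − ⟨g_j, x_* − x_j⟩; (iii) ⟨g_N, g_i − μ x_i⟩ = 0 for all 0 ≤ i ≤ N−1; and (iv) ⟨g_N, x_N⟩ = 0. Then x_* is a global minimizer of V_𝒯 with V_𝒯(x_*) = f_*, and for every y ∈ span{g_0 − μ x_0, …, g_{N−1} − μ x_{N−1}} one has V_𝒯(y) ≥ f_N + (μ/2)‖y − x_N‖²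 ≥ f_N; in particular inf over that span of V_𝒯(y) − f_* is at least f_N − f_*. -/
open scoped RealInnerProductSpace BigOperators

lemma vT_vertex {d : ℕ} {I : Type*} [Fintype I] [DecidableEq I] {L μ : ℝ} (hμL : μ < L)
    (x g : I → EuclideanSpace ℝ (Fin d)) (f : I → ℝ)
    (y : EuclideanSpace ℝ (Fin d)) (j : I) :
    vT L μ x g f y (fun i => if i = j then 1 else 0)
      = f j + ⟪g j, y - x j⟫ + μ / 2 * ‖y - x j‖ ^ 2 := by
  have hne : L - μ ≠ 0 := ne_of_gt (sub_pos.mpr hμL)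
  unfold vT
  rw [show (∑ i, (if i = j then (1:ℝ) else 0) • (g i - μ • x i)) = g j - μ • x j by
    simp [ite_smul]]
  rw [show (∑ i, (if i = j then (1:ℝ) else 0) * (f i + 1 / (2 * (L - μ)) * ‖g i - L • x i‖ ^ 2 - L / 2 * ‖x i‖ ^ 2)) = f j + 1 / (2 * (L - μ)) * ‖g j - L • x j‖ ^ 2 - L / 2 * ‖x j‖ ^ 2 by
    simp [ite_mul]]
  simp only [← real_inner_self_eq_norm_sq, inner_sub_left, inner_sub_right,
    real_inner_smul_left, real_inner_smul_right]
  rw [real_inner_comm (g j) y, real_inner_comm (x j) y, real_inner_comm (x j) (g j)]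
  field_simp
  ring

lemma vT_le {d : ℕ} {I : Type*} [Fintype I] {L μ : ℝ} (hL : 0 < L) (hμ : 0 ≤ μ)
    (hμL : μ < L) (x g : I → EuclideanSpace ℝ (Fin d)) (f : I → ℝ) {F : ℝ}
    {u : EuclideanSpace ℝ (Fin d)}
    (hinterp : ∀ j, 1 / (2 * L) * ‖g j‖ ^ 2
        + μ * L / (2 * (L - μ)) * ‖u - x j + (1 / L) • g j‖ ^ 2
        ≤ F - f j - ⟪g j, u - x j⟫)
    {α : I → ℝ} (hα : α ∈ stdSimplex ℝ I) :
    vT L μ x g f u α ≤ F := by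
  have hne : L - μ ≠ 0 := ne_of_gt (sub_pos.mpr hμL)
  have hpos : 0 < 2 * (L - μ) := by linarith
  obtain ⟨hα0, hα1⟩ := hα
  set H : EuclideanSpace ℝ (Fin d) := ∑ i, α i • (g i - μ • x i) with hH
  -- step A : rewrite vT
  have hA : vT L μ x g f u α
      = (∑ i, α i * (μ / 2 * ‖u‖ ^ 2 + ⟪u, g i - μ • x i⟫
          + (f i + 1 / (2 * (L - μ)) * ‖g i - L • x i‖ ^ 2 - L / 2 * ‖x i‖ ^ 2)))
        - ‖H‖ ^ 2 / (2 * (L - μ)) := by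
    have huH : ⟪u, H⟫ = ∑ i, α i * ⟪u, g i - μ • x i⟫ := by
      rw [hH, inner_sum]
      exact Finset.sum_congr rfl fun i _ => real_inner_smul_right _ _ _
    have hsplit : ∑ i, α i * (μ / 2 * ‖u‖ ^ 2 + ⟪u, g i - μ • x i⟫
          + (f i + 1 / (2 * (L - μ)) * ‖g i - L • x i‖ ^ 2 - L / 2 * ‖x i‖ ^ 2))
        = (∑ i, α i) * (μ / 2 * ‖u‖ ^ 2) + (∑ i, α i * ⟪u, g i - μ • x i⟫)
          + ∑ i, α i * (f i + 1 / (2 * (L - μ)) * ‖g i - L • x i‖ ^ 2 - L / 2 * ‖x i‖ ^ 2) := by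
      rw [Finset.sum_mul, ← Finset.sum_add_distrib, ← Finset.sum_add_distrib]
      exact Finset.sum_congr rfl fun i _ => by ring
    rw [hsplit, hα1, one_mul, ← huH]
    unfold vT
    rw [← hH]
    simp only [← real_inner_self_eq_norm_sq, inner_sub_left, inner_sub_right,
      real_inner_smul_left, real_inner_smul_right]
    rw [real_inner_comm H u]
    field_simp
    ring
  rw [hA]
  -- step B : per-index bound
  have hB : ∀ i, μ / 2 * ‖u‖ ^ 2 + ⟪u, g i - μ • x i⟫
      + (f i + 1 / (2 * (L - μ)) * ‖g i - L • x i‖ ^ 2 - L / 2 * ‖x i‖ ^ 2)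
      ≤ F - (μ ^ 2 * ‖u‖ ^ 2 + 2 * μ * ⟪u, g i - μ • x i⟫) / (2 * (L - μ)) := by
    intro i
    have hid : μ / 2 * ‖u‖ ^ 2 + ⟪u, g i - μ • x i⟫
        + (f i + 1 / (2 * (L - μ)) * ‖g i - L • x i‖ ^ 2 - L / 2 * ‖x i‖ ^ 2)
        + (μ ^ 2 * ‖u‖ ^ 2 + 2 * μ * ⟪u, g i - μ • x i⟫) / (2 * (L - μ))
        = f i + ⟪g i, u - x i⟫ + 1 / (2 * L) * ‖g i‖ ^ 2
          + μ * L / (2 * (L - μ)) * ‖u - x i + (1 / L) • g i‖ ^ 2 := by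
      simp only [← real_inner_self_eq_norm_sq, inner_sub_left, inner_sub_right,
        inner_add_left, inner_add_right, real_inner_smul_left, real_inner_smul_right]
      rw [real_inner_comm (g i) u, real_inner_comm (x i) u, real_inner_comm (x i) (g i)]
      field_simp
      ring
    have := hinterp i
    linarith
  calc (∑ i, α i * (μ / 2 * ‖u‖ ^ 2 + ⟪u, g i - μ • x i⟫
          + (f i + 1 / (2 * (L - μ)) * ‖g i - L • x i‖ ^ 2 - L / 2 * ‖x i‖ ^ 2)))
        - ‖H‖ ^ 2 / (2 * (L - μ))
      ≤ (∑ i, α i * (F - (μ ^ 2 * ‖u‖ ^ 2 + 2 * μ * ⟪u, g i - μ • x i⟫) / (2 * (L - μ))))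
        - ‖H‖ ^ 2 / (2 * (L - μ)) := by
        gcongr with i hi
        · exact hα0 i
        · exact hB i
    _ = F - ‖μ • u + H‖ ^ 2 / (2 * (L - μ)) := by
        have huH : ⟪u, H⟫ = ∑ i, α i * ⟪u, g i - μ • x i⟫ := by
          rw [hH, inner_sum]
          exact Finset.sum_congr rfl fun i _ => real_inner_smul_right _ _ _
        have hsum : ∑ i, α i * (F - (μ ^ 2 * ‖u‖ ^ 2 + 2 * μ * ⟪u, g i - μ • x i⟫) / (2 * (L - μ)))
            = (∑ i, α i) * (F - μ ^ 2 * ‖u‖ ^ 2 / (2 * (L - μ)))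
              - (∑ i, α i * ⟪u, g i - μ • x i⟫) * (2 * μ / (2 * (L - μ))) := by
          rw [Finset.sum_mul, Finset.sum_mul, ← Finset.sum_sub_distrib]
          exact Finset.sum_congr rfl fun i _ => by ring
        rw [hsum, hα1, one_mul, ← huH]
        have hexp : ‖μ • u + H‖ ^ 2 = μ ^ 2 * ‖u‖ ^ 2 + 2 * μ * ⟪u, H⟫ + ‖H‖ ^ 2 := by
          simp only [← real_inner_self_eq_norm_sq, inner_add_left, inner_add_right,
            real_inner_smul_left, real_inner_smul_right]
          rw [real_inner_comm H u]
          ring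
        rw [hexp]; ring
    _ ≤ F := by
        have : 0 ≤ ‖μ • u + H‖ ^ 2 / (2 * (L - μ)) := by positivity
        linarith

lemma vT_bddAbove {d : ℕ} {I : Type*} [Fintype I] {L μ : ℝ} (hμL : μ < L)
    (x g : I → EuclideanSpace ℝ (Fin d)) (f : I → ℝ) (y : EuclideanSpace ℝ (Fin d)) :
    BddAbove (vT L μ x g f y '' stdSimplex ℝ I) := by
  refine ⟨L / 2 * ‖y‖ ^ 2 + ∑ i, |f i + 1 / (2 * (L - μ)) * ‖g i - L • x i‖ ^ 2 - L / 2 * ‖x i‖ ^ 2|, ?_⟩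
  rintro _ ⟨α, ⟨hα0, hα1⟩, rfl⟩
  unfold vT
  have h1 : ∑ i, α i * (f i + 1 / (2 * (L - μ)) * ‖g i - L • x i‖ ^ 2 - L / 2 * ‖x i‖ ^ 2)
      ≤ ∑ i, |f i + 1 / (2 * (L - μ)) * ‖g i - L • x i‖ ^ 2 - L / 2 * ‖x i‖ ^ 2| := by
    refine Finset.sum_le_sum fun i _ => ?_
    have h2 : α i ≤ 1 := by
      rw [← hα1]
      exact Finset.single_le_sum (fun j _ => hα0 j) (Finset.mem_univ i)
    calc α i * _ ≤ α i * |f i + 1 / (2 * (L - μ)) * ‖g i - L • x i‖ ^ 2 - L / 2 * ‖x i‖ ^ 2| :=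
          mul_le_mul_of_nonneg_left (le_abs_self _) (hα0 i)
      _ ≤ 1 * |f i + 1 / (2 * (L - μ)) * ‖g i - L • x i‖ ^ 2 - L / 2 * ‖x i‖ ^ 2| :=
          mul_le_mul_of_nonneg_right h2 (abs_nonneg _)
      _ = _ := one_mul _
  have h3 : 0 ≤ (L - μ) / 2 * ‖y - (1 / (L - μ)) • ∑ i, α i • (g i - μ • x i)‖ ^ 2 := by
    have : (0:ℝ) ≤ (L - μ) / 2 := by linarith
    positivity
  linarith

lemma delta_mem {I : Type*} [Fintype I] [DecidableEq I] (j : I) :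
    (fun i => if i = j then (1:ℝ) else 0) ∈ stdSimplex ℝ I := by
  constructor
  · intro i; dsimp only; split <;> norm_num
  · simp

/-- With index set `I*_N = {0, …, N, *}` (modelled as `Option (Fin (N+1))`, where `none`
plays the role of `*` and `Fin.last N` the role of `N`): under hypotheses (i)–(iv),
`x_*` globally minimizes `V_T` with value `f_*`, and on the span of
`{g_0 − μx_0, …, g_{N−1} − μx_{N−1}}` one has
`V_T(y) ≥ f_N + (μ/2)‖y − x_N‖² ≥ f_N`, hence `V_T(y) − f_* ≥ f_N − f_*`. -/
theorem stmt9 {d N : ℕ} (hN : 1 ≤ N) {L μ : ℝ} (hL : 0 < L) (hμ : 0 ≤ μ) (hμL : μ < L)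
    (x g : Option (Fin (N + 1)) → EuclideanSpace ℝ (Fin d)) (f : Option (Fin (N + 1)) → ℝ)
    (hx0 : x (some 0) = 0) (hgstar : g none = 0)
    (hinterp : ∀ j : Option (Fin (N + 1)),
      1 / (2 * L) * ‖g j‖ ^ 2 + μ * L / (2 * (L - μ)) * ‖x none - x j + (1 / L) • g j‖ ^ 2
        ≤ f none - f j - ⟪g j, x none - x j⟫)
    (horth : ∀ i : Fin (N + 1), (i : ℕ) < N →
      ⟪g (some (Fin.last N)), g (some i) - μ • x (some i)⟫ = 0)
    (horthx : ⟪g (some (Fin.last N)), x (some (Fin.last N))⟫ = 0) :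
    (∀ y, f none ≤ VT L μ x g f y) ∧
    VT L μ x g f (x none) = f none ∧
    ∀ y ∈ Submodule.span ℝ
        ((fun i : Fin (N + 1) => g (some i) - μ • x (some i)) ''
          {i : Fin (N + 1) | (i : ℕ) < N}),
      (f (some (Fin.last N)) + μ / 2 * ‖y - x (some (Fin.last N))‖ ^ 2 ≤ VT L μ x g f y ∧
        f (some (Fin.last N)) ≤ f (some (Fin.last N)) + μ / 2 * ‖y - x (some (Fin.last N))‖ ^ 2) ∧
      f (some (Fin.last N)) - f none ≤ VT L μ x g f y - f none := by
  have hne : L - μ ≠ 0 := ne_of_gt (sub_pos.mpr hμL)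
  have hbdd := fun y => vT_bddAbove hμL x g f y
  -- lower bound via vertices
  have hlow : ∀ (y : EuclideanSpace ℝ (Fin d)) (j : Option (Fin (N + 1))),
      f j + ⟪g j, y - x j⟫ + μ / 2 * ‖y - x j‖ ^ 2 ≤ VT L μ x g f y := by
    intro y j
    rw [← vT_vertex hμL x g f y j]
    exact le_csSup (hbdd y) ⟨_, delta_mem j, rfl⟩
  have part1 : ∀ y, f none ≤ VT L μ x g f y := by
    intro y
    have h := hlow y none
    rw [hgstar] at h
    simp only [inner_zero_left] at h
    have : (0:ℝ) ≤ μ / 2 * ‖y - x none‖ ^ 2 := by positivity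
    linarith
  have part2 : VT L μ x g f (x none) = f none := by
    refine le_antisymm ?_ (part1 _)
    refine csSup_le ⟨_, ⟨_, delta_mem none, rfl⟩⟩ ?_
    rintro _ ⟨α, hα, rfl⟩
    exact vT_le hL hμ hμL x g f hinterp hα
  refine ⟨part1, part2, ?_⟩
  intro y hy
  have hperp : ⟪g (some (Fin.last N)), y⟫ = 0 := by
    induction hy using Submodule.span_induction with
    | mem v hv =>
      obtain ⟨i, hi, rfl⟩ := hv
      exact horth i hi
    | zero => simp
    | add a b _ _ ha hb => rw [inner_add_right, ha, hb, add_zero]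
    | smul c a _ ha => rw [real_inner_smul_right, ha, mul_zero]
  have h := hlow y (some (Fin.last N))
  rw [inner_sub_right, hperp, horthx, sub_zero, add_zero] at h
  have h0 : (0:ℝ) ≤ μ / 2 * ‖y - x (some (Fin.last N))‖ ^ 2 := by positivity
  exact ⟨⟨h, by linarith⟩, by linarith [part1 y]⟩
end
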